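/- For all real s and t with 0 < s < 1 and 0 ≤ t < -log(1 - s), we have -t - s·log(e^{-t} + s - 1) ≥ t - s·log(e^t + s - 1). -/

import Mathlib

open Real

theorem stmt3 (s t : ℝ) (hs0 : 0 < s) (hs1 : s < 1) (ht0 : 0 ≤ t)
    (ht1 : t < -Real.log (1 - s)) :
    -t - s * Real.log (Real.exp (-t) + s - 1) ≥ t - s * Real.log (Real.exp t + s - 1) := by
  have h1s : 0 < 1 - s := by linarith
  set f : ℝ → ℝ := fun x =>
    s * Real.log (Real.exp x + s - 1) - s * Real.log (Real.exp (-x) + s - 1) - 2 * x with hf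
  have hpos1 : ∀ x : ℝ, 0 ≤ x → 0 < Real.exp x + s - 1 := by
    intro x hx
    have := Real.one_le_exp hx
    linarith
  have hpos2 : ∀ x : ℝ, x ≤ t → 0 < Real.exp (-x) + s - 1 := by
    intro x hx
    have h : 1 - s < Real.exp (-x) := by
      calc 1 - s = Real.exp (Real.log (1 - s)) := (Real.exp_log h1s).symm
        _ < Real.exp (-x) := Real.exp_lt_exp.mpr (by linarith)
    linarith
  -- derivative of f
  have hder : ∀ x ∈ Set.Icc 0 t, HasDerivAt f
      (s * (Real.exp x / (Real.exp x + s - 1)) +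
        s * (Real.exp (-x) / (Real.exp (-x) + s - 1)) - 2) x := by
    intro x hx
    have hA : HasDerivAt (fun x : ℝ => Real.exp x + s - 1) (Real.exp x) x := by
      simpa using ((Real.hasDerivAt_exp x).add_const s).sub_const 1
    have hBin : HasDerivAt (fun x : ℝ => Real.exp (-x)) (-Real.exp (-x)) x := by
      simpa using (hasDerivAt_neg x).exp
    have hB : HasDerivAt (fun x : ℝ => Real.exp (-x) + s - 1) (-Real.exp (-x)) x := by
      simpa using (hBin.add_const s).sub_const 1
    have hlogA := hA.log (ne_of_gt (hpos1 x hx.1))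
    have hlogB := hB.log (ne_of_gt (hpos2 x hx.2))
    have h := ((hlogA.const_mul s).sub (hlogB.const_mul s)).sub
      ((hasDerivAt_id x).const_mul 2)
    refine h.congr_deriv ?_
    ring
  -- the derivative is nonnegative
  have hnn : ∀ x ∈ Set.Icc 0 t,
      0 ≤ s * (Real.exp x / (Real.exp x + s - 1)) +
        s * (Real.exp (-x) / (Real.exp (-x) + s - 1)) - 2 := by
    intro x hx
    set a := Real.exp x with ha
    set b := Real.exp (-x) with hb
    have hab : a * b = 1 := by
      rw [ha, hb, ← Real.exp_add]; simp
    have ha1 : 1 ≤ a := Real.one_le_exp hx.1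
    have hA : 0 < a + s - 1 := hpos1 x hx.1
    have hB : 0 < b + s - 1 := hpos2 x hx.2
    have hb0 : 0 < b := Real.exp_pos _
    have hab2 : 0 ≤ a + b - 2 := by nlinarith [sq_nonneg (a - 1)]
    have h2 : 2 * ((a + s - 1) * (b + s - 1)) ≤ s * a * (b + s - 1) + (a + s - 1) * (s * b) := by
      nlinarith [mul_nonneg (mul_nonneg h1s.le (by linarith : (0:ℝ) ≤ 2 - s)) hab2]
    have h3 : 2 ≤ s * a / (a + s - 1) + s * b / (b + s - 1) := by
      rw [div_add_div _ _ (ne_of_gt hA) (ne_of_gt hB), le_div_iff₀ (mul_pos hA hB)]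
      linarith
    have hea : s * (a / (a + s - 1)) = s * a / (a + s - 1) := by ring
    have heb : s * (b / (b + s - 1)) = s * b / (b + s - 1) := by ring
    linarith [h3, hea, heb, (by rw [hea, heb] : s * (a / (a + s - 1)) + s * (b / (b + s - 1)) = s * a / (a + s - 1) + s * b / (b + s - 1))]
  have hmono : MonotoneOn f (Set.Icc 0 t) := by
    apply monotoneOn_of_deriv_nonneg (convex_Icc 0 t)
    · exact fun x hx => (hder x hx).continuousAt.continuousWithinAt
    · intro x hx
      rw [interior_Icc] at hx
      exact (hder x ⟨hx.1.le, hx.2.le⟩).differentiableAt.differentiableWithinAt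
    · intro x hx
      rw [interior_Icc] at hx
      rw [(hder x ⟨hx.1.le, hx.2.le⟩).deriv]
      exact hnn x ⟨hx.1.le, hx.2.le⟩
  have hf0 : f 0 = 0 := by simp [hf]
  have hft : f 0 ≤ f t :=
    hmono (Set.left_mem_Icc.mpr ht0) (Set.right_mem_Icc.mpr ht0) ht0
  have : f t = s * Real.log (Real.exp t + s - 1) - s * Real.log (Real.exp (-t) + s - 1) - 2 * t := rfl
  linarith
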